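/- Let g ∈ S_n be a permutation whose distinct cycle lengths greater than 1 are ν_1 < ν_2 < ... < ν_r. Then the order of g satisfies ord(g) ≤ (n/r)^r. -/
import Mathlib

open Finset in
lemma amgm_aux {ι : Type*} (s : Finset ι) (z : ι → ℝ) (hz : ∀ i ∈ s, 0 ≤ z i) :
    ∏ i ∈ s, z i ≤ ((∑ i ∈ s, z i) / s.card) ^ s.card := by
  rcases eq_or_ne s.card 0 with h0 | h0
  · rw [Finset.card_eq_zero] at h0
    subst h0; simp
  have hrpos : (0 : ℝ) < s.card := by positivity
  have key := Real.geom_mean_le_arith_mean_weighted s (fun _ => ((s.card : ℝ))⁻¹) z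
    (fun i _ => by positivity)
    (by simp [Finset.sum_const, mul_inv_cancel₀ hrpos.ne']) hz
  have hprodnn : 0 ≤ ∏ i ∈ s, z i := Finset.prod_nonneg hz
  have h1 : (∏ i ∈ s, z i) ^ ((s.card : ℝ))⁻¹ ≤ (∑ i ∈ s, z i) / s.card := by
    rw [← Real.finset_prod_rpow s _ hz]
    calc ∏ i ∈ s, z i ^ ((s.card : ℝ))⁻¹ ≤ ∑ i ∈ s, ((s.card : ℝ))⁻¹ * z i := key
    _ = (∑ i ∈ s, z i) / s.card := by rw [← Finset.mul_sum]; ring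
  have h2 := Real.rpow_le_rpow (Real.rpow_nonneg hprodnn _) h1 (le_of_lt hrpos)
  rwa [← Real.rpow_mul hprodnn, inv_mul_cancel₀ hrpos.ne', Real.rpow_one,
    Real.rpow_natCast] at h2

/-- If the distinct cycle lengths `>1` of `g ∈ S_n` are `ν_1 < ... < ν_r`, then
`ord(g) ≤ (n/r)^r`. -/
theorem stmt5 (n r : ℕ) (g : Equiv.Perm (Fin n))
    (hr : g.cycleType.toFinset.card = r) :
    (orderOf g : ℝ) ≤ ((n : ℝ) / r) ^ r := by
  rcases eq_or_ne r 0 with rfl | hr0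
  · rw [Finset.card_eq_zero, Multiset.toFinset_eq_empty] at hr
    rw [Equiv.Perm.cycleType_eq_zero] at hr
    simp [hr]
  have hrposR : (0 : ℝ) < r := by positivity
  set S := g.cycleType.toFinset with hS
  -- orderOf g ≤ ∏ ν ∈ S, ν
  have hlcm : orderOf g = S.lcm id := by
    rw [← Equiv.Perm.lcm_cycleType, ← Multiset.lcm_dedup, Finset.lcm_def, Multiset.map_id]
    rfl
  have hpos : ∀ a ∈ S, 0 < a := fun a ha =>
    lt_of_lt_of_le (by norm_num) (Equiv.Perm.two_le_of_mem_cycleType (Multiset.mem_toFinset.mp ha))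
  have hprodpos : 0 < ∏ a ∈ S, a := Finset.prod_pos hpos
  have h1 : orderOf g ≤ ∏ a ∈ S, a := by
    rw [hlcm]
    exact Nat.le_of_dvd hprodpos (Finset.lcm_dvd fun a ha => Finset.dvd_prod_of_mem id ha)
  -- sum bound
  have hsum : ∑ a ∈ S, a ≤ n := by
    have h2 : ∑ a ∈ S, a ≤ g.cycleType.sum := by
      obtain ⟨u, hu⟩ := Multiset.le_iff_exists_add.mp (Multiset.dedup_le g.cycleType)
      show (S.val.map id).sum ≤ _
      rw [Multiset.map_id]
      show g.cycleType.dedup.sum ≤ _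
      conv_rhs => rw [hu]
      rw [Multiset.sum_add]
      exact Nat.le_add_right _ _
    calc ∑ a ∈ S, a ≤ g.cycleType.sum := h2
      _ = g.support.card := Equiv.Perm.sum_cycleType g
      _ ≤ Fintype.card (Fin n) := Finset.card_le_univ _
      _ = n := Fintype.card_fin n
  -- chain in ℝ
  have amgm := amgm_aux S (fun a => (a : ℝ)) (fun i _ => by positivity)
  rw [hr] at amgm
  calc (orderOf g : ℝ) ≤ (∏ a ∈ S, a : ℕ) := by exact_mod_cast h1
    _ = ∏ a ∈ S, (a : ℝ) := by push_cast; rfl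
    _ ≤ ((∑ a ∈ S, (a : ℝ)) / r) ^ r := amgm
    _ ≤ ((n : ℝ) / r) ^ r := by
        gcongr
        rw [← Nat.cast_sum]
        exact_mod_cast hsum
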